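/- Under the hypotheses of the main theorem, for every X ⊆ λ, either some B_{α,β,Y} ∈ ℬ satisfies B_{α,β,Y} ⊆ X, or some B_{α,β,Y} ∈ ℬ satisfies B_{α,β,Y} ⊆ λ \ X. Hence the filter generated by ℬ is an ultrafilter on λ. -/

import Mathlib

open Cardinal Set

/-- `U` is an ultrafilter on the set of ordinals `S`. -/
def IsUltrafilterOn (S : Set Ordinal.{0}) (U : Set (Set Ordinal.{0})) : Prop :=
  (∀ A ∈ U, A ⊆ S) ∧ S ∈ U ∧ ∅ ∉ U ∧
    (∀ A ∈ U, ∀ B ∈ U, A ∩ B ∈ U) ∧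
    (∀ A ∈ U, ∀ B, A ⊆ B → B ⊆ S → B ∈ U) ∧
    (∀ A, A ⊆ S → A ∈ U ∨ S \ A ∈ U)

/-- `s` has cardinality `< μ`. -/
def cardLT (s : Set Ordinal.{0}) (μ : Cardinal.{0}) : Prop := #s < Cardinal.lift.{1,0} μ

/-- `s` has cardinality `μ`. -/
def cardEQ (s : Set Ordinal.{0}) (μ : Cardinal.{0}) : Prop := #s = Cardinal.lift.{1,0} μ


/-- `λ_{<i} = sup{λ_j : j < i}` (as an ordinal). -/
noncomputable def lamlt (lam_ : Ordinal.{0} → Cardinal.{0}) (i : Ordinal.{0}) : Ordinal.{0} :=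
  sSup ((fun j => (lam_ j).ord) '' Set.Iio i)

/-- `B_{α,β,Y} = {ζ < λ : ∃ i ∈ Y (λ_{<i} ≤ ζ < λ_i ∧ ζ ∈ A_{i,g_β(i)} ∧ ζ > f_α(i))}`. -/
def Bset (lam_ : Ordinal.{0} → Cardinal.{0}) (A : Ordinal.{0} → Ordinal.{0} → Set Ordinal.{0})
    (f g : Ordinal.{0} → Ordinal.{0} → Ordinal.{0}) (α β : Ordinal.{0})
    (Y : Set Ordinal.{0}) : Set Ordinal.{0} :=
  {ζ | ∃ i ∈ Y, lamlt lam_ i ≤ ζ ∧ ζ < (lam_ i).ord ∧ ζ ∈ A i (g β i) ∧ f α i < ζ}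

lemma sSup_lt_ord'' {s : Set Ordinal.{0}} {c : Cardinal.{0}} (hreg : c.IsRegular)
    (hs : ∀ x ∈ s, x < c.ord) (hcard : #s < Cardinal.lift.{1,0} c) : sSup s < c.ord := by
  have hsub : s ⊆ Set.Iio c.ord := fun x hx => hs x hx
  have hsmall : Small.{0} s := small_subset hsub
  let F : Shrink.{0} s → Ordinal.{0} := fun x => ((equivShrink s).symm x : Ordinal)
  have hrange : Set.range F = s := by
    ext x
    constructor
    · rintro ⟨y, rfl⟩; exact ((equivShrink s).symm y).2
    · intro hx; exact ⟨equivShrink s ⟨x, hx⟩, by simp [F]⟩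
  have heq : sSup s = ⨆ i, F i := by rw [iSup, hrange]
  rw [heq]
  apply Ordinal.iSup_lt_ord
  · rw [hreg.cof_eq]
    have h1 : Cardinal.lift.{1,0} #(Shrink.{0} s) = #s := lift_mk_shrink'' s
    rw [← Cardinal.lift_lt.{0,1}, h1]
    exact hcard
  · intro i; exact hs _ ((equivShrink s).symm i).2

/-- under the hypotheses of the main theorem, for every `X ⊆ λ`
either some `B_{α,β,Y} ∈ ℬ` is contained in `X` or some `B_{α,β,Y} ∈ ℬ` is contained
in `λ \ X`; hence the filter generated by `ℬ` is an ultrafilter on `λ`. -/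
theorem stmt7 (lam κ χlam χθ : Cardinal.{0})
    (lam_ θ : Ordinal.{0} → Cardinal.{0})
    (E : Set (Set Ordinal.{0})) (U : Ordinal.{0} → Set (Set Ordinal.{0}))
    (A : Ordinal.{0} → Ordinal.{0} → Set Ordinal.{0})
    (f g : Ordinal.{0} → Ordinal.{0} → Ordinal.{0})
    -- (α) κ = cf(λ) < λ
    (hcof : lam.ord.cof = κ) (hκlt : κ < lam)
    -- (β) E is a uniform ultrafilter on κ
    (hE : IsUltrafilterOn (Set.Iio κ.ord) E)
    (hEuni : ∀ Y ∈ E, cardEQ Y κ)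
    -- (γ) λ is a strong limit cardinal
    (hsl : lam.IsStrongLimit)
    -- (δ) ⟨λ_i : i < κ⟩ strictly increasing regular cardinals tending to λ
    (hreg : ∀ i < κ.ord, (lam_ i).IsRegular)
    (hmono : ∀ i j, i < j → j < κ.ord → lam_ i < lam_ j)
    (hlt : ∀ i < κ.ord, lam_ i < lam)
    (hcofinal : ∀ c < lam, ∃ i < κ.ord, c ≤ lam_ i)
    -- (ε) U_i is a uniform ultrafilter on λ_i
    (hU : ∀ i < κ.ord, IsUltrafilterOn (Set.Iio (lam_ i).ord) (U i))
    (hUuni : ∀ i < κ.ord, ∀ X ∈ U i, cardEQ X (lam_ i))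
    -- (ζ) U_i is generated by the ⊆*-decreasing sequence ⟨A i α : α < θ i⟩
    (hAmem : ∀ i < κ.ord, ∀ α < (θ i).ord, A i α ∈ U i)
    (hAdec : ∀ i < κ.ord, ∀ α α', α < α' → α' < (θ i).ord →
      cardLT (A i α' \ A i α) (lam_ i))
    (hAgen : ∀ i < κ.ord, ∀ B ∈ U i, ∃ α < (θ i).ord, cardLT (A i α \ B) (lam_ i))
    -- (η) χ_λ̄ = tcf(∏ λ_i, <_E) and χ_θ̄ = tcf(∏ θ_i, <_E), witnessed by scales
    (hχlam : χlam.IsRegular) (hχθ : χθ.IsRegular)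
    (hf : ∀ α < χlam.ord, ∀ i < κ.ord, f α i < (lam_ i).ord)
    (hfinc : ∀ α α', α < α' → α' < χlam.ord → {i | i < κ.ord ∧ f α i < f α' i} ∈ E)
    (hfcof : ∀ h : Ordinal.{0} → Ordinal.{0}, (∀ i < κ.ord, h i < (lam_ i).ord) →
      ∃ α < χlam.ord, {i | i < κ.ord ∧ h i < f α i} ∈ E)
    (hg : ∀ β < χθ.ord, ∀ i < κ.ord, g β i < (θ i).ord)
    (hginc : ∀ β β', β < β' → β' < χθ.ord → {i | i < κ.ord ∧ g β i < g β' i} ∈ E)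
    (hgcof : ∀ h : Ordinal.{0} → Ordinal.{0}, (∀ i < κ.ord, h i < (θ i).ord) →
      ∃ β < χθ.ord, {i | i < κ.ord ∧ h i < g β i} ∈ E) :
    (∀ X, X ⊆ Set.Iio lam.ord →
      (∃ α < χlam.ord, ∃ β < χθ.ord, ∃ Y ∈ E, Bset lam_ A f g α β Y ⊆ X) ∨
      (∃ α < χlam.ord, ∃ β < χθ.ord, ∃ Y ∈ E, Bset lam_ A f g α β Y ⊆ Set.Iio lam.ord \ X)) ∧
    IsUltrafilterOn (Set.Iio lam.ord)
      {X | X ⊆ Set.Iio lam.ord ∧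
        ∃ α < χlam.ord, ∃ β < χθ.ord, ∃ Y ∈ E, Bset lam_ A f g α β Y ⊆ X} := by
  classical
  obtain ⟨hEsub, hEuniv, hEempty, hEinter, hEup, hEultra⟩ := hE
  have hlaminf : ℵ₀ ≤ lam := hsl.aleph0_le
  have hlimord : Order.IsSuccLimit lam.ord := Cardinal.isSuccLimit_ord hlaminf
  have hκinf : ℵ₀ ≤ κ := by rw [← hcof]; exact Ordinal.aleph0_le_cof.2 hlimord
  have hκord : Order.IsSuccLimit κ.ord := Cardinal.isSuccLimit_ord hκinf
  have hUmemIio : ∀ i < κ.ord, Iio (lam_ i).ord ∈ U i := fun i hi => (hU i hi).2.1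
  have hUinter : ∀ i < κ.ord, ∀ a ∈ U i, ∀ b ∈ U i, a ∩ b ∈ U i := fun i hi => (hU i hi).2.2.2.1
  have hUne : ∀ i < κ.ord, ∀ a ∈ U i, a.Nonempty := by
    intro i hi a ha
    rcases a.eq_empty_or_nonempty with rfl | h
    · exact absurd ha (hU i hi).2.2.1
    · exact h
  have hUco : ∀ i < κ.ord, ∀ s : Set Ordinal.{0}, s ⊆ Iio (lam_ i).ord →
      #s < Cardinal.lift.{1,0} (lam_ i) → Iio (lam_ i).ord \ s ∈ U i := by
    intro i hi s hsub hcard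
    rcases (hU i hi).2.2.2.2.2 s hsub with h | h
    · exact absurd (hUuni i hi s h) hcard.ne
    · exact h
  have hordlim : ∀ i < κ.ord, Order.IsSuccLimit ((lam_ i).ord) := fun i hi =>
    Cardinal.isSuccLimit_ord (hreg i hi).aleph0_le
  have hUgt : ∀ i < κ.ord, ∀ x < (lam_ i).ord, (Iio (lam_ i).ord \ Iic x) ∈ U i := by
    intro i hi x hx
    apply hUco i hi
    · exact fun y hy => lt_of_le_of_lt hy hx
    · have h1 : #(Iic x) = Cardinal.lift.{1,0} (Order.succ x).card := by
        rw [← Order.Iio_succ]; exact Ordinal.mk_Iio_ordinal _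
      rw [h1, Cardinal.lift_lt]
      exact Cardinal.lt_ord.1 ((hordlim i hi).succ_lt hx)
  have hθpos : ∀ i < κ.ord, (0 : Ordinal) < (θ i).ord := by
    intro i hi
    obtain ⟨a, ha, -⟩ := hAgen i hi _ (hUmemIio i hi)
    exact lt_of_le_of_lt (zero_le (a := a)) ha
  -- the tail of indices where κ ≤ λ_i
  set tail : Set Ordinal.{0} := {i | i < κ.ord ∧ κ ≤ lam_ i} with htaildef
  have htailsub : tail ⊆ Iio κ.ord := fun i h => h.1
  have htail : tail ∈ E := by
    obtain ⟨i₀, hi₀, hi₀'⟩ := hcofinal κ hκlt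
    rcases hEultra tail htailsub with h | h
    · exact h
    · exfalso
      have hsub2 : Iio κ.ord \ tail ⊆ Iio (Order.succ i₀) := by
        rintro i ⟨hi, hni⟩
        simp only [mem_Iio, Order.lt_succ_iff]
        by_contra hcon
        push_neg at hcon
        exact hni ⟨hi, hi₀'.trans (hmono i₀ i hcon hi).le⟩
      have hcard2 : #(Iio κ.ord \ tail : Set Ordinal) ≤
          Cardinal.lift.{1,0} (Order.succ i₀).card := by
        rw [← Ordinal.mk_Iio_ordinal]
        exact Cardinal.mk_le_mk_of_subset hsub2
      have heq := hEuni _ h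
      rw [cardEQ] at heq
      rw [heq] at hcard2
      have hlt2 : (Order.succ i₀).card < κ := Cardinal.lt_ord.1 (hκord.succ_lt hi₀)
      exact absurd (Cardinal.lift_le.1 hcard2) (not_le.2 hlt2)
  -- interval facts
  have hIcolt : ∀ i ∈ tail, lamlt lam_ i < (lam_ i).ord := by
    rintro i ⟨hi, hκi⟩
    unfold lamlt
    apply sSup_lt_ord'' (hreg i hi)
    · rintro x ⟨j, hj, rfl⟩
      exact Cardinal.ord_lt_ord.2 (hmono j i hj hi)
    · calc #((fun j => (lam_ j).ord) '' Iio i) ≤ #(Iio i) := Cardinal.mk_image_le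
        _ = Cardinal.lift.{1,0} i.card := Ordinal.mk_Iio_ordinal i
        _ < Cardinal.lift.{1,0} κ := Cardinal.lift_lt.2 (Cardinal.lt_ord.1 hi)
        _ ≤ Cardinal.lift.{1,0} (lam_ i) := Cardinal.lift_le.2 hκi
  have hIcoU : ∀ i ∈ tail, Ico (lamlt lam_ i) (lam_ i).ord ∈ U i := by
    intro i hti
    rw [show Ico (lamlt lam_ i) (lam_ i).ord = Iio (lam_ i).ord \ Iio (lamlt lam_ i) by ext x; simp [and_comm]]
    apply hUco i hti.1
    · exact fun x hx => lt_trans hx (hIcolt i hti)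
    · rw [Ordinal.mk_Iio_ordinal, Cardinal.lift_lt]
      exact Cardinal.lt_ord.1 (hIcolt i hti)
  -- THE CORE LEMMA
  have core : ∀ Y₀ ∈ E, ∀ T : Ordinal.{0} → Set Ordinal.{0},
      (∀ i, i ∈ Y₀ → i < κ.ord → T i ∈ U i) →
      ∃ α < χlam.ord, ∃ β < χθ.ord, ∃ Y ∈ E, Y ⊆ Y₀ ∧
        ∀ ζ ∈ Bset lam_ A f g α β Y,
          ∃ i, i ∈ Y ∧ lamlt lam_ i ≤ ζ ∧ ζ < (lam_ i).ord ∧ ζ ∈ T i := by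
    intro Y₀ hY₀ T hT
    have hsel : ∀ i, i < κ.ord →
        ∃ b, b < (θ i).ord ∧ (i ∈ Y₀ → cardLT (A i b \ T i) (lam_ i)) := by
      intro i hi
      by_cases hY : i ∈ Y₀
      · obtain ⟨b, hb1, hb2⟩ := hAgen i hi (T i) (hT i hY hi)
        exact ⟨b, hb1, fun _ => hb2⟩
      · exact ⟨0, hθpos i hi, fun h => absurd h hY⟩
    choose! bfun hbf1 hbf2 using hsel
    obtain ⟨β, hβ, hZ₁⟩ := hgcof bfun hbf1
    set Z₁ : Set Ordinal.{0} := {i | i < κ.ord ∧ bfun i < g β i} with hZ₁def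
    set bad : Ordinal.{0} → Set Ordinal.{0} :=
      fun i => (A i (g β i) \ T i) ∩ Iio (lam_ i).ord with hbaddef
    have hbadsmall : ∀ i, i ∈ Y₀ → i ∈ Z₁ → #(bad i) < Cardinal.lift.{1,0} (lam_ i) := by
      intro i hiY hiZ
      obtain ⟨hiκ, hig⟩ := hiZ
      have h1 : #(A i (g β i) \ A i (bfun i) : Set Ordinal) < Cardinal.lift.{1,0} (lam_ i) :=
        hAdec i hiκ _ _ hig (hg β hβ i hiκ)
      have h2 : #(A i (bfun i) \ T i : Set Ordinal) < Cardinal.lift.{1,0} (lam_ i) :=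
        hbf2 i hiκ hiY
      have hsub : bad i ⊆ (A i (g β i) \ A i (bfun i)) ∪ (A i (bfun i) \ T i) := by
        rintro x ⟨⟨hxa, hxt⟩, -⟩
        by_cases hxb : x ∈ A i (bfun i)
        · exact Or.inr ⟨hxb, hxt⟩
        · exact Or.inl ⟨hxa, hxb⟩
      calc #(bad i)
          ≤ #((A i (g β i) \ A i (bfun i)) ∪ (A i (bfun i) \ T i) : Set Ordinal) :=
            Cardinal.mk_le_mk_of_subset hsub
        _ ≤ _ + _ := Cardinal.mk_union_le _ _
        _ < Cardinal.lift.{1,0} (lam_ i) :=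
            Cardinal.add_lt_of_lt (Cardinal.aleph0_le_lift.2 (hreg i hiκ).aleph0_le) h1 h2
    set bd : Ordinal.{0} → Ordinal.{0} :=
      fun i => if i ∈ Y₀ ∩ Z₁ then sSup (bad i) else 0 with hbddef
    have hbd : ∀ i < κ.ord, bd i < (lam_ i).ord := by
      intro i hi
      by_cases him : i ∈ Y₀ ∩ Z₁
      · rw [hbddef]; simp only [him, if_true]
        apply sSup_lt_ord'' (hreg i hi)
        · rintro x ⟨-, hx⟩; exact hx
        · exact hbadsmall i him.1 him.2
      · rw [hbddef]; simp only [him, if_false]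
        exact (hordlim i hi).pos
    obtain ⟨α, hα, hZ₂⟩ := hfcof bd hbd
    refine ⟨α, hα, β, hβ, Y₀ ∩ (Z₁ ∩ {i | i < κ.ord ∧ bd i < f α i}), ?_,
      inter_subset_left, ?_⟩
    · exact hEinter _ hY₀ _ (hEinter _ hZ₁ _ hZ₂)
    · rintro ζ ⟨i, ⟨hiY, hiZ₁, hiZ₂⟩, hζ1, hζ2, hζA, hζf⟩
      refine ⟨i, ⟨hiY, hiZ₁, hiZ₂⟩, hζ1, hζ2, ?_⟩
      by_contra hζT
      have hmem : ζ ∈ bad i := ⟨⟨hζA, hζT⟩, hζ2⟩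
      have hle : ζ ≤ bd i := by
        rw [hbddef]
        simp only [mem_inter_iff, hiY, hiZ₁, and_self, if_true]
        have hsm : Small.{0} (bad i) :=
          small_subset (inter_subset_right : bad i ⊆ Iio (lam_ i).ord)
        exact le_csSup Ordinal.bddAbove_of_small hmem
      exact absurd (hle.trans_lt (hiZ₂.2.trans hζf)) (lt_irrefl ζ)
  -- B sets live below λ and are nonempty
  have hBsub : ∀ α β Y, Y ⊆ Iio κ.ord → Bset lam_ A f g α β Y ⊆ Iio lam.ord := by
    intro α β Y hY ζ hζ
    obtain ⟨i, hiY, -, hζ2, -, -⟩ := hζ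
    exact lt_trans hζ2 (Cardinal.ord_lt_ord.2 (hlt i (hY hiY)))
  have hBne : ∀ α < χlam.ord, ∀ β < χθ.ord, ∀ Y ∈ E, (Bset lam_ A f g α β Y).Nonempty := by
    intro α hα β hβ Y hY
    have hYT : Y ∩ tail ∈ E := hEinter _ hY _ htail
    have hne : (Y ∩ tail).Nonempty := by
      rcases (Y ∩ tail).eq_empty_or_nonempty with h | h
      · rw [h] at hYT; exact absurd hYT hEempty
      · exact h
    obtain ⟨i, hiY, hit⟩ := hne
    have hiκ : i < κ.ord := hit.1
    have hM : (Ico (lamlt lam_ i) (lam_ i).ord ∩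
        (A i (g β i) ∩ (Iio (lam_ i).ord \ Iic (f α i)))) ∈ U i :=
      hUinter i hiκ _ (hIcoU i hit) _ (hUinter i hiκ _ (hAmem i hiκ _ (hg β hβ i hiκ)) _
        (hUgt i hiκ _ (hf α hα i hiκ)))
    obtain ⟨ζ, hζ⟩ := hUne i hiκ _ hM
    obtain ⟨⟨h1, h2⟩, h3, h4, h5⟩ := hζ
    exact ⟨ζ, i, hiY, h1, h2, h3, not_le.1 h5⟩
  -- Part 1
  have part1 : ∀ X, X ⊆ Set.Iio lam.ord →
      (∃ α < χlam.ord, ∃ β < χθ.ord, ∃ Y ∈ E, Bset lam_ A f g α β Y ⊆ X) ∨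
      (∃ α < χlam.ord, ∃ β < χθ.ord, ∃ Y ∈ E,
        Bset lam_ A f g α β Y ⊆ Set.Iio lam.ord \ X) := by
    intro X hX
    set W : Set Ordinal.{0} :=
      {i | i ∈ tail ∧ X ∩ Ico (lamlt lam_ i) (lam_ i).ord ∈ U i} with hWdef
    have hWsub : W ⊆ Iio κ.ord := fun i h => h.1.1
    rcases hEultra W hWsub with hW | hW
    · left
      obtain ⟨α, hα, β, hβ, Y, hY, hYsub, hconc⟩ :=
        core W hW (fun i => X ∩ Ico (lamlt lam_ i) (lam_ i).ord) (fun i hi _ => hi.2)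
      refine ⟨α, hα, β, hβ, Y, hY, fun ζ hζ => ?_⟩
      obtain ⟨i, hiY, -, -, hT⟩ := hconc ζ hζ
      exact hT.1
    · right
      have hY₀ : (Iio κ.ord \ W) ∩ tail ∈ E := hEinter _ hW _ htail
      have hTU : ∀ i, i ∈ (Iio κ.ord \ W) ∩ tail → i < κ.ord →
          Ico (lamlt lam_ i) (lam_ i).ord \ X ∈ U i := by
        rintro i ⟨⟨hiκ', hiW⟩, hit⟩ hiκ
        have hXI : X ∩ Ico (lamlt lam_ i) (lam_ i).ord ∉ U i := fun hc => hiW ⟨hit, hc⟩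
        have hsub' : X ∩ Ico (lamlt lam_ i) (lam_ i).ord ⊆ Iio (lam_ i).ord :=
          fun x hx => hx.2.2
        rcases (hU i hiκ).2.2.2.2.2 _ hsub' with h | h
        · exact absurd h hXI
        · have hmem := hUinter i hiκ _ (hIcoU i hit) _ h
          have heq : Ico (lamlt lam_ i) (lam_ i).ord ∩
              (Iio (lam_ i).ord \ (X ∩ Ico (lamlt lam_ i) (lam_ i).ord)) =
              Ico (lamlt lam_ i) (lam_ i).ord \ X := by
            ext x
            constructor
            · rintro ⟨hx1, hx2, hx3⟩
              exact ⟨hx1, fun hxX => hx3 ⟨hxX, hx1⟩⟩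
            · rintro ⟨hx1, hx2⟩
              exact ⟨hx1, hx1.2, fun hc => hx2 hc.1⟩
          rwa [heq] at hmem
      obtain ⟨α, hα, β, hβ, Y, hY, hYsub, hconc⟩ :=
        core _ hY₀ (fun i => Ico (lamlt lam_ i) (lam_ i).ord \ X) hTU
      refine ⟨α, hα, β, hβ, Y, hY, fun ζ hζ => ?_⟩
      obtain ⟨i, hiY, -, hζ2, hT⟩ := hconc ζ hζ
      have hiκ : i < κ.ord := (hYsub hiY).2.1
      exact ⟨lt_trans hζ2 (Cardinal.ord_lt_ord.2 (hlt i hiκ)), hT.2⟩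
  refine ⟨part1, fun B hB => hB.1, ?_, ?_, ?_, ?_, ?_⟩
  · -- S ∈ F
    refine ⟨subset_rfl, 0, ?_, 0, ?_, Iio κ.ord, hEuniv, hBsub 0 0 _ subset_rfl⟩
    · rw [Cardinal.lt_ord, Ordinal.card_zero]; exact hχlam.pos
    · rw [Cardinal.lt_ord, Ordinal.card_zero]; exact hχθ.pos
  · -- ∅ ∉ F
    rintro ⟨-, α, hα, β, hβ, Y, hY, hsub⟩
    obtain ⟨ζ, hζ⟩ := hBne α hα β hβ Y hY
    exact hsub hζ
  · -- closed under intersections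
    rintro X₁ ⟨hX₁, α₁, hα₁, β₁, hβ₁, Y₁, hY₁, hs₁⟩ X₂ ⟨hX₂, α₂, hα₂, β₂, hβ₂, Y₂, hY₂, hs₂⟩
    have hY₀ : Y₁ ∩ Y₂ ∩ tail ∈ E := hEinter _ (hEinter _ hY₁ _ hY₂) _ htail
    set T : Ordinal.{0} → Set Ordinal.{0} := fun i =>
      Ico (lamlt lam_ i) (lam_ i).ord ∩ (A i (g β₁ i) ∩ (A i (g β₂ i) ∩
        ((Iio (lam_ i).ord \ Iic (f α₁ i)) ∩ (Iio (lam_ i).ord \ Iic (f α₂ i))))) with hTdef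
    have hTU : ∀ i, i ∈ Y₁ ∩ Y₂ ∩ tail → i < κ.ord → T i ∈ U i := by
      rintro i ⟨-, hit⟩ hiκ
      exact hUinter i hiκ _ (hIcoU i hit) _ (hUinter i hiκ _ (hAmem i hiκ _ (hg β₁ hβ₁ i hiκ)) _
        (hUinter i hiκ _ (hAmem i hiκ _ (hg β₂ hβ₂ i hiκ)) _
          (hUinter i hiκ _ (hUgt i hiκ _ (hf α₁ hα₁ i hiκ)) _ (hUgt i hiκ _ (hf α₂ hα₂ i hiκ)))))
    obtain ⟨α, hα, β, hβ, Y, hY, hYsub, hconc⟩ := core _ hY₀ T hTU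
    refine ⟨fun x hx => hX₁ hx.1, α, hα, β, hβ, Y, hY, fun ζ hζ => ?_⟩
    obtain ⟨i, hiY, hl1, hl2, hT⟩ := hconc ζ hζ
    obtain ⟨hIco, hA₁, hA₂, ⟨-, hf₁⟩, -, hf₂⟩ := hT
    constructor
    · exact hs₁ ⟨i, (hYsub hiY).1.1, hl1, hl2, hA₁, not_le.1 hf₁⟩
    · exact hs₂ ⟨i, (hYsub hiY).1.2, hl1, hl2, hA₂, not_le.1 hf₂⟩
  · -- upward closed
    rintro X ⟨-, α, hα, β, hβ, Y, hY, hs⟩ B hXB hBS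
    exact ⟨hBS, α, hα, β, hβ, Y, hY, hs.trans hXB⟩
  · -- ultrafilter
    intro X hXS
    rcases part1 X hXS with h | h
    · exact Or.inl ⟨hXS, h⟩
    · exact Or.inr ⟨diff_subset, h⟩
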